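/- For every interpretation (M, γ) of the logic L, the set Φ_p = {φ propositional : γ(φ) = ⊤} is a prime theory of IPC: it is consistent, deductively closed under IPC, and φ ∨ ψ ∈ Φ_p implies φ ∈ Φ_p or ψ ∈ Φ_p. Moreover, (M,γ) ⊨ □φ iff φ ∈ Φ_p, for all propositional φ. -/
import Mathlib


/-- A (proper) filter on a Heyting algebra. -/
structure IsFilter {H : Type*} [HeytingAlgebra H] (F : Set H) : Prop where
  nonempty : F.Nonempty
  mem_of_le : ∀ {a b : H}, a ∈ F → a ≤ b → b ∈ F
  inf_mem : ∀ {a b : H}, a ∈ F → b ∈ F → a ⊓ b ∈ F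
  bot_not_mem : ⊥ ∉ F

/-- An ultrafilter: a (proper) filter maximal w.r.t. inclusion. -/
def IsUltrafilter {H : Type*} [HeytingAlgebra H] (F : Set H) : Prop :=
  IsFilter F ∧ ∀ G : Set H, IsFilter G → F ⊆ G → G = F

/-- Formulas over variables ℕ with ⊥, →, ∨, ∧ and □. -/
inductive Fm : Type where
  | var : ℕ → Fm
  | bot : Fm
  | imp : Fm → Fm → Fm
  | or  : Fm → Fm → Fm
  | and : Fm → Fm → Fm
  | box : Fm → Fm
deriving DecidableEq

namespace Fm

def neg (φ : Fm) : Fm := imp φ bot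
def top : Fm := neg bot
/-- Material biconditional φ ↔ ψ. -/
def biimp (φ ψ : Fm) : Fm := and (imp φ ψ) (imp ψ φ)
/-- Strict equivalence φ ≡ ψ := □(φ→ψ) ∧ □(ψ→φ). -/
def eqv (φ ψ : Fm) : Fm := and (box (imp φ ψ)) (box (imp ψ φ))

/-- Simultaneous substitution. -/
def substAll (σ : ℕ → Fm) : Fm → Fm
  | var n => σ n
  | bot => bot
  | imp a b => imp (substAll σ a) (substAll σ b)
  | or a b => or (substAll σ a) (substAll σ b)
  | and a b => and (substAll σ a) (substAll σ b)
  | box a => box (substAll σ a)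

/-- Substitution of ρ for the variable x. -/
def subst (x : ℕ) (ρ : Fm) (χ : Fm) : Fm :=
  substAll (fun n => if n = x then ρ else var n) χ

/-- Formulas without the modal operator (propositional formulas). -/
def BoxFree : Fm → Prop
  | var _ => True
  | bot => True
  | imp a b => BoxFree a ∧ BoxFree b
  | or a b => BoxFree a ∧ BoxFree b
  | and a b => BoxFree a ∧ BoxFree b
  | box _ => False

end Fm

/-- Hilbert-style intuitionistic propositional calculus. -/
inductive IPC : Set Fm → Fm → Prop where
  | hyp {Φ φ} : φ ∈ Φ → IPC Φ φ
  | a1 {Φ} (φ ψ) : IPC Φ (.imp φ (.imp ψ φ))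
  | a2 {Φ} (φ ψ χ) :
      IPC Φ (.imp (.imp φ (.imp ψ χ)) (.imp (.imp φ ψ) (.imp φ χ)))
  | a3 {Φ} (φ ψ) : IPC Φ (.imp φ (.imp ψ (.and φ ψ)))
  | a4 {Φ} (φ ψ) : IPC Φ (.imp (.and φ ψ) φ)
  | a5 {Φ} (φ ψ) : IPC Φ (.imp (.and φ ψ) ψ)
  | a6 {Φ} (φ ψ) : IPC Φ (.imp φ (.or φ ψ))
  | a7 {Φ} (φ ψ) : IPC Φ (.imp ψ (.or φ ψ))
  | a8 {Φ} (φ ψ χ) :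
      IPC Φ (.imp (.imp φ χ) (.imp (.imp ψ χ) (.imp (.or φ ψ) χ)))
  | a9 {Φ} (φ) : IPC Φ (.imp .bot φ)
  | mp {Φ φ ψ} : IPC Φ (.imp φ ψ) → IPC Φ φ → IPC Φ ψ

/-- An intuitionistic propositional tautology or a substitution-instance thereof. -/
def IsIntAx (φ : Fm) : Prop :=
  ∃ (φ₀ : Fm) (σ : ℕ → Fm), φ₀.BoxFree ∧ IPC ∅ φ₀ ∧ φ = φ₀.substAll σ

/-- Axioms (i)-(iv) of the logic L. -/
inductive LAx : Fm → Prop where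
  | i {φ} : IsIntAx φ → LAx φ
  | ii (φ) : LAx (.imp (.box φ) φ)
  | iii (φ ψ χ) :
      LAx (.imp (.box (.imp φ ψ)) (.imp (.box (.imp ψ χ)) (.box (.imp φ χ))))
  | iv (φ ψ) : LAx (.imp (.box (.or φ ψ)) (.or (.box φ) (.box ψ)))

/-- Derivability in the modal logic L: axioms (i)-(iv), rules MP and Axiom
Necessitation, plus theorem schemes tertium non datur and SP. -/
inductive L : Set Fm → Fm → Prop where
  | hyp {Φ φ} : φ ∈ Φ → L Φ φ
  | ax {Φ φ} : LAx φ → L Φ φ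
  | an {Φ φ} : LAx φ → L Φ (.box φ)
  | tnd {Φ} (φ) : L Φ (.or φ (Fm.neg φ))
  | sp {Φ} (φ ψ χ : Fm) (x : ℕ) :
      L Φ (.imp (Fm.eqv φ ψ) (Fm.eqv (χ.subst x φ) (χ.subst x ψ)))
  | mp {Φ φ ψ} : L Φ (.imp φ ψ) → L Φ φ → L Φ ψ

/-- A model: a Heyting algebra with an ultrafilter TRUE and an operation f_□
satisfying the four truth conditions. -/
structure LModel (H : Type*) [HeytingAlgebra H] where
  TRUE : Set H
  ultra : IsUltrafilter TRUE
  fbox : H → H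
  cond1 : ∀ m : H, fbox m ≤ m
  cond2 : ∀ a b c : H, fbox (a ⇨ b) ≤ fbox (b ⇨ c) ⇨ fbox (a ⇨ c)
  cond3 : ∀ a b : H, fbox (a ⊔ b) ≤ fbox a ⊔ fbox b
  cond4 : ∀ m : H, fbox m ∈ TRUE ↔ m = ⊤

/-- Canonical extension of an assignment γ : V → M to all formulas. -/
def Fm.eval {H : Type*} [HeytingAlgebra H] (M : LModel H) (γ : ℕ → H) : Fm → H
  | .var n => γ n
  | .bot => ⊥
  | .imp a b => a.eval M γ ⇨ b.eval M γ
  | .or a b => a.eval M γ ⊔ b.eval M γ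
  | .and a b => a.eval M γ ⊓ b.eval M γ
  | .box a => M.fbox (a.eval M γ)

/-- Satisfaction: (M,γ) ⊨ φ iff γ(φ) ∈ TRUE. -/
def LModel.Sat {H : Type*} [HeytingAlgebra H] (M : LModel H) (γ : ℕ → H)
    (φ : Fm) : Prop :=
  φ.eval M γ ∈ M.TRUE

section Aux

variable {H : Type*} [HeytingAlgebra H]

lemma top_mem_of_filter {F : Set H} (hF : IsFilter F) : (⊤ : H) ∈ F := by
  obtain ⟨a, ha⟩ := hF.nonempty
  exact hF.mem_of_le ha le_top

/-- If a ∉ F with F an ultrafilter, some f ∈ F has f ⊓ a = ⊥. -/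
lemma ultra_compl {F : Set H} (hF : IsUltrafilter F) {a : H} (ha : a ∉ F) :
    ∃ f ∈ F, f ⊓ a = ⊥ := by
  by_contra hcon
  push_neg at hcon
  set G : Set H := {c | ∃ f ∈ F, f ⊓ a ≤ c} with hG
  have hGfilter : IsFilter G := by
    constructor
    · exact ⟨a, ⊤, top_mem_of_filter hF.1, by simp⟩
    · rintro b c ⟨f, hf, hle⟩ hbc
      exact ⟨f, hf, hle.trans hbc⟩
    · rintro b c ⟨f, hf, hfb⟩ ⟨g, hg, hgc⟩
      refine ⟨f ⊓ g, hF.1.inf_mem hf hg, ?_⟩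
      have : f ⊓ g ⊓ a ≤ (f ⊓ a) ⊓ (g ⊓ a) := by
        simp only [le_inf_iff]
        exact ⟨⟨inf_le_left.trans inf_le_left, inf_le_right⟩,
          ⟨inf_le_left.trans inf_le_right, inf_le_right⟩⟩
      exact this.trans (inf_le_inf hfb hgc)
    · rintro ⟨f, hf, hle⟩
      exact hcon f hf (le_bot_iff.mp hle)
  have hsub : F ⊆ G := fun f hf => ⟨f, hf, inf_le_left⟩
  have := hF.2 G hGfilter hsub
  apply ha
  rw [← this]
  exact ⟨⊤, top_mem_of_filter hF.1, by simp⟩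

/-- Ultrafilters are prime. -/
lemma ultra_prime {F : Set H} (hF : IsUltrafilter F) {a b : H}
    (hab : a ⊔ b ∈ F) : a ∈ F ∨ b ∈ F := by
  by_contra hcon
  push_neg at hcon
  obtain ⟨f, hf, hfa⟩ := ultra_compl hF hcon.1
  obtain ⟨g, hg, hgb⟩ := ultra_compl hF hcon.2
  have hmem : f ⊓ g ⊓ (a ⊔ b) ∈ F := hF.1.inf_mem (hF.1.inf_mem hf hg) hab
  have : f ⊓ g ⊓ (a ⊔ b) = ⊥ := by
    rw [inf_sup_left]
    have h1 : f ⊓ g ⊓ a ≤ ⊥ := by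
      rw [← hfa]; exact inf_le_inf (inf_le_left) le_rfl
    have h2 : f ⊓ g ⊓ b ≤ ⊥ := by
      rw [← hgb]; exact inf_le_inf (inf_le_right) le_rfl
    exact le_bot_iff.mp (sup_le h1 h2)
  rw [this] at hmem
  exact hF.1.bot_not_mem hmem

lemma ipc_sound (M : LModel H) (γ : ℕ → H) {Φ : Set Fm} {ψ : Fm}
    (h : IPC Φ ψ) (hΦ : ∀ χ ∈ Φ, χ.eval M γ = ⊤) : ψ.eval M γ = ⊤ := by
  induction h with
  | hyp hm => exact hΦ _ hm
  | a1 φ ψ =>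
      simp only [Fm.eval, eq_top_iff, le_himp_iff, top_inf_eq]
      exact inf_le_left
  | a2 φ ψ χ =>
      simp only [Fm.eval, eq_top_iff, le_himp_iff, top_inf_eq]
      set a := φ.eval M γ; set b := ψ.eval M γ; set c := χ.eval M γ
      have key : (a ⇨ b ⇨ c) ⊓ (a ⇨ b) ⊓ a ≤ (b ⇨ c) ⊓ b := by
        simp only [le_inf_iff]
        constructor
        · calc (a ⇨ b ⇨ c) ⊓ (a ⇨ b) ⊓ a ≤ (a ⇨ b ⇨ c) ⊓ a :=
                inf_le_inf (inf_le_left) le_rfl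
            _ ≤ b ⇨ c := himp_inf_le
        · calc (a ⇨ b ⇨ c) ⊓ (a ⇨ b) ⊓ a ≤ (a ⇨ b) ⊓ a :=
                inf_le_inf (inf_le_right) le_rfl
            _ ≤ b := himp_inf_le
      exact key.trans himp_inf_le
  | a3 φ ψ =>
      simp only [Fm.eval, eq_top_iff, le_himp_iff, top_inf_eq]
      exact le_rfl
  | a4 φ ψ =>
      simp only [Fm.eval, eq_top_iff, le_himp_iff, top_inf_eq]
      exact inf_le_left
  | a5 φ ψ =>
      simp only [Fm.eval, eq_top_iff, le_himp_iff, top_inf_eq]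
      exact inf_le_right
  | a6 φ ψ =>
      simp only [Fm.eval, eq_top_iff, le_himp_iff, top_inf_eq]
      exact le_sup_left
  | a7 φ ψ =>
      simp only [Fm.eval, eq_top_iff, le_himp_iff, top_inf_eq]
      exact le_sup_right
  | a8 φ ψ χ =>
      simp only [Fm.eval, eq_top_iff, le_himp_iff, top_inf_eq]
      set a := φ.eval M γ; set b := ψ.eval M γ; set c := χ.eval M γ
      rw [inf_sup_left]
      apply sup_le
      · calc (a ⇨ c) ⊓ (b ⇨ c) ⊓ a ≤ (a ⇨ c) ⊓ a :=
            inf_le_inf (inf_le_left) le_rfl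
          _ ≤ c := himp_inf_le
      · calc (a ⇨ c) ⊓ (b ⇨ c) ⊓ b ≤ (b ⇨ c) ⊓ b :=
            inf_le_inf (inf_le_right) le_rfl
          _ ≤ c := himp_inf_le
  | a9 φ =>
      simp only [Fm.eval, eq_top_iff, le_himp_iff, top_inf_eq]
      exact bot_le
  | mp _ _ ih1 ih2 =>
      simp only [Fm.eval] at ih1
      rw [eq_top_iff]
      calc (⊤ : H) = _ ⇨ _ := ih1.symm
        _ = ⊤ ⇨ _ := by rw [ih2]
        _ ≤ _ := by simp

end Aux

/-- For every interpretation (M,γ), the set of □-free formulas denoting ⊤ is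
a prime IPC-theory, and □ is a truth predicate for it. -/
theorem box_is_intuitionistic_truth_predicate {H : Type*} [HeytingAlgebra H]
    (M : LModel H) (γ : ℕ → H) :
    ¬ IPC {ψ : Fm | ψ.BoxFree ∧ ψ.eval M γ = ⊤} .bot ∧
    (∀ ψ : Fm, IPC {ψ : Fm | ψ.BoxFree ∧ ψ.eval M γ = ⊤} ψ → ψ.BoxFree →
      ψ ∈ {ψ : Fm | ψ.BoxFree ∧ ψ.eval M γ = ⊤}) ∧
    (∀ φ ψ : Fm, (Fm.or φ ψ) ∈ {ψ : Fm | ψ.BoxFree ∧ ψ.eval M γ = ⊤} →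
      φ ∈ {ψ : Fm | ψ.BoxFree ∧ ψ.eval M γ = ⊤} ∨
      ψ ∈ {ψ : Fm | ψ.BoxFree ∧ ψ.eval M γ = ⊤}) ∧
    (∀ φ : Fm, φ.BoxFree →
      (M.Sat γ (.box φ) ↔ φ ∈ {ψ : Fm | ψ.BoxFree ∧ ψ.eval M γ = ⊤})) := by
  have hΦ : ∀ χ ∈ {ψ : Fm | ψ.BoxFree ∧ ψ.eval M γ = ⊤}, χ.eval M γ = ⊤ :=
    fun χ hχ => hχ.2
  have hne : (⊥ : H) ≠ ⊤ := by
    intro h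
    exact M.ultra.1.bot_not_mem (h ▸ top_mem_of_filter M.ultra.1)
  refine ⟨?_, ?_, ?_, ?_⟩
  · intro h
    exact hne (ipc_sound M γ h hΦ)
  · intro ψ h hbf
    exact ⟨hbf, ipc_sound M γ h hΦ⟩
  · intro φ ψ hor
    obtain ⟨⟨hbφ, hbψ⟩, heval⟩ := hor
    simp only [Fm.eval] at heval
    have h1 : M.fbox (φ.eval M γ ⊔ ψ.eval M γ) ∈ M.TRUE := (M.cond4 _).2 heval
    have h2 : M.fbox (φ.eval M γ) ⊔ M.fbox (ψ.eval M γ) ∈ M.TRUE :=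
      M.ultra.1.mem_of_le h1 (M.cond3 _ _)
    rcases ultra_prime M.ultra h2 with h | h
    · exact Or.inl ⟨hbφ, (M.cond4 _).1 h⟩
    · exact Or.inr ⟨hbψ, (M.cond4 _).1 h⟩
  · intro φ hbf
    constructor
    · intro h
      exact ⟨hbf, (M.cond4 _).1 h⟩
    · intro h
      exact (M.cond4 _).2 h.2
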